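/- Let E be a point-congruous Σ-Mal'tsev category. Then for every object Y, the full subcategory Σl_Y(E) of the slice category E/Y on the Σ-special morphisms is a Mal'tsev category: every internal reflexive relation in Σl_Y(E) is an equivalence relation. In particular the full subcategory of Σ-special objects of E is a Mal'tsev category (the Mal'tsev core). -/

import Mathlib

open CategoryTheory CategoryTheory.Limits

universe v u

variable {C : Type u} [Category.{v} C]

/-- A pair of morphisms with common codomain is jointly extremally epic if any monomorphism
through which both factor is an isomorphism. -/
def JointlyExtremallyEpic {A B Z : C} (a : A ⟶ Z) (b : B ⟶ Z) : Prop :=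
  ∀ ⦃M : C⦄ (m : M ⟶ Z), Mono m → ∀ (a' : A ⟶ M) (b' : B ⟶ M),
    a' ≫ m = a → b' ≫ m = b → IsIso m

/-- A class of split epimorphisms (with chosen splittings). -/
abbrev SigClass (C : Type u) [Category.{v} C] : Type _ :=
  ∀ ⦃X Y : C⦄, (X ⟶ Y) → (Y ⟶ X) → Prop

/-- The class is fibrational: stable under pullback and containing the isomorphisms. -/
def Fibrational (Sig : SigClass C) : Prop :=
  (∀ ⦃X Y X' Y' : C⦄ (f : X ⟶ Y) (s : Y ⟶ X) (f' : X' ⟶ Y') (s' : Y' ⟶ X')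
      (g : Y' ⟶ Y) (gbar : X' ⟶ X),
      IsPullback gbar f' f g → s ≫ f = 𝟙 Y → s' ≫ f' = 𝟙 Y' → s' ≫ gbar = g ≫ s →
      Sig f s → Sig f' s') ∧
  (∀ ⦃X Y : C⦄ (f : X ⟶ Y) (s : Y ⟶ X), IsIso f → s ≫ f = 𝟙 Y → Sig f s)

/-- `C` is a `Σ`-Mal'tsev category: in any pullback of a split epimorphism `(f,s)` of the
class along a split epimorphism `(g,t)`, the pair of induced sections is jointly extremally
epic. -/
def SigmaMaltsev (Sig : SigClass C) : Prop :=
  ∀ ⦃X Y X' Y' : C⦄ (f : X ⟶ Y) (s : Y ⟶ X) (f' : X' ⟶ Y') (s' : Y' ⟶ X')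
    (g : Y' ⟶ Y) (t : Y ⟶ Y') (gbar : X' ⟶ X) (tbar : X ⟶ X'),
    s ≫ f = 𝟙 Y → s' ≫ f' = 𝟙 Y' → t ≫ g = 𝟙 Y → tbar ≫ gbar = 𝟙 X →
    IsPullback gbar f' f g → s' ≫ gbar = g ≫ s → tbar ≫ f' = f ≫ t →
    Sig f s → JointlyExtremallyEpic s' tbar

/-- An internal reflexive relation on `X`. -/
structure ReflRel (X : C) where
  R : C
  d0 : R ⟶ X
  d1 : R ⟶ X
  s0 : X ⟶ R
  jm : ∀ ⦃Z : C⦄ (a b : Z ⟶ R), a ≫ d0 = b ≫ d0 → a ≫ d1 = b ≫ d1 → a = b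
  r0 : s0 ≫ d0 = 𝟙 X
  r1 : s0 ≫ d1 = 𝟙 X

def ReflRel.Symm {X : C} (R : ReflRel X) : Prop :=
  ∃ σ : R.R ⟶ R.R, σ ≫ R.d0 = R.d1 ∧ σ ≫ R.d1 = R.d0

def ReflRel.Trans [HasPullbacks C] {X : C} (R : ReflRel X) : Prop :=
  ∃ t : pullback R.d1 R.d0 ⟶ R.R,
    t ≫ R.d0 = pullback.fst R.d1 R.d0 ≫ R.d0 ∧
    t ≫ R.d1 = pullback.snd R.d1 R.d0 ≫ R.d1

def ReflRel.IsEquiv [HasPullbacks C] {X : C} (R : ReflRel X) : Prop :=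
  R.Symm ∧ R.Trans

/-- A connector for a pair of reflexive relations, satisfying the Mal'tsev identities
`p(xRxSy) = y` and `p(xRySy) = x`. -/
def IsConnector [HasPullbacks C] {X : C} (R S : ReflRel X) (p : pullback R.d1 S.d0 ⟶ X) : Prop :=
  pullback.lift (S.d0 ≫ R.s0) (𝟙 S.R) (by simp [R.r1]) ≫ p = S.d1 ∧
  pullback.lift (𝟙 R.R) (R.d1 ≫ S.s0) (by simp [S.r0]) ≫ p = R.d0

/-- `[R,S] = 0` : the pair of reflexive relations admits a connector. -/
def Centralize [HasPullbacks C] {X : C} (R S : ReflRel X) : Prop :=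
  ∃ p, IsConnector R S p

/-- The kernel relation of a morphism. -/
noncomputable def kerRel [HasPullbacks C] {A B : C} (f : A ⟶ B) : ReflRel A where
  R := pullback f f
  d0 := pullback.fst f f
  d1 := pullback.snd f f
  s0 := pullback.lift (𝟙 A) (𝟙 A) rfl
  jm := fun _ a b h0 h1 => pullback.hom_ext h0 h1
  r0 := pullback.lift_fst _ _ _
  r1 := pullback.lift_snd _ _ _
/-- The category of points (split epimorphisms with chosen splitting) of `C`. -/
structure Pt (C : Type u) [Category.{v} C] where
  dom : C
  cod : C
  p : dom ⟶ cod
  s : cod ⟶ dom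
  sp : s ≫ p = 𝟙 cod

@[ext]
structure PtHom (a b : Pt C) where
  dh : a.dom ⟶ b.dom
  ch : a.cod ⟶ b.cod
  wp : dh ≫ b.p = a.p ≫ ch
  ws : a.s ≫ dh = ch ≫ b.s

instance : Category (Pt C) where
  Hom a b := PtHom a b
  id a := ⟨𝟙 a.dom, 𝟙 a.cod, by simp, by simp⟩
  comp u v := ⟨u.dh ≫ v.dh, u.ch ≫ v.ch,
    by rw [Category.assoc, v.wp, ← Category.assoc, u.wp, Category.assoc],
    by rw [← Category.assoc, u.ws, Category.assoc, v.ws, ← Category.assoc]⟩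
  id_comp u := by apply PtHom.ext <;> simp [CategoryStruct.comp, CategoryStruct.id]
  comp_id u := by apply PtHom.ext <;> simp [CategoryStruct.comp, CategoryStruct.id]
  assoc u v w := by apply PtHom.ext <;> simp [CategoryStruct.comp]

/-- The class `Σ` is point-congruous: the full subcategory `Σ(C)` of `Pt(C)` is stable
under finite limits. -/
def PointCongruous (Sig : SigClass C) : Prop :=
  ∀ (J : Type) (_ : SmallCategory J) (_ : FinCategory J) (F : J ⥤ Pt C),
    (∀ j : J, Sig (F.obj j).p (F.obj j).s) →
    ∀ (c : Cone F), IsLimit c → Sig c.pt.p c.pt.s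
/-- A morphism is `Σ`-special when its kernel relation is a `Σ`-relation. -/
def SigSpecial [HasPullbacks C] (Sig : SigClass C) {A B : C} (f : A ⟶ B) : Prop :=
  Sig (kerRel f).d0 (kerRel f).s0

section Aux

variable {C : Type u} [Category.{v} C]

attribute [local simp] pullback.lift_fst pullback.lift_snd pullback.lift_fst_assoc
  pullback.lift_snd_assoc prod.lift_fst prod.lift_snd prod.lift_fst_assoc prod.lift_snd_assoc

@[simp] lemma Pt_comp_dh {a b c : Pt C} (u : a ⟶ b) (v : b ⟶ c) :
    (u ≫ v).dh = u.dh ≫ v.dh := rfl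

@[simp] lemma Pt_comp_ch {a b c : Pt C} (u : a ⟶ b) (v : b ⟶ c) :
    (u ≫ v).ch = u.ch ≫ v.ch := rfl

/-- Right cancellation for `Σ`-special morphisms (uses point-congruity):
if `f` and `g ≫ f` are `Σ`-special then so is `g`. -/
lemma sigSpecial_of_comp [HasFiniteLimits C] (Sig : SigClass C)
    (hfib : Fibrational Sig) (hpc : PointCongruous Sig)
    {W X Y : C} (g : W ⟶ X) (f : X ⟶ Y)
    (hf : SigSpecial Sig f) (hgf : SigSpecial Sig (g ≫ f)) :
    SigSpecial Sig g := by
  -- points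
  let A : Pt C := ⟨pullback (g ≫ f) (g ≫ f), W, pullback.fst _ _,
    pullback.lift (𝟙 W) (𝟙 W) rfl, by simp⟩
  let Cp : Pt C := ⟨pullback f f, X, pullback.fst _ _,
    pullback.lift (𝟙 X) (𝟙 X) rfl, by simp⟩
  let B : Pt C := ⟨X, X, 𝟙 X, 𝟙 X, by simp⟩
  let Pl : Pt C := ⟨pullback g g, W, pullback.fst _ _,
    pullback.lift (𝟙 W) (𝟙 W) rfl, by simp⟩
  let mA : A ⟶ Cp :=
    ⟨pullback.map (g ≫ f) (g ≫ f) f f g g (𝟙 Y) (by simp) (by simp), g,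
      by simp [A, Cp], by apply pullback.hom_ext <;> simp [A, Cp]⟩
  let mB : B ⟶ Cp := ⟨pullback.lift (𝟙 X) (𝟙 X) rfl, 𝟙 X,
    by simp [B, Cp], by simp [B, Cp]⟩
  let piA : Pl ⟶ A :=
    ⟨pullback.map g g (g ≫ f) (g ≫ f) (𝟙 W) (𝟙 W) f (by simp) (by simp), 𝟙 W,
      by simp [Pl, A], by apply pullback.hom_ext <;> simp [Pl, A]⟩
  let piB : Pl ⟶ B := ⟨pullback.fst g g ≫ g, g,
    by simp [Pl, B], by simp [Pl, B]⟩
  have hcomm : piA ≫ mA = piB ≫ mB := by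
    apply PtHom.ext
    · show piA.dh ≫ mA.dh = piB.dh ≫ mB.dh
      apply pullback.hom_ext
      · simp [piA, mA, piB, mB]
        erw [Category.comp_id]
      · simp only [piA, mA, piB, mB, Category.assoc, pullback.lift_snd,
          pullback.lift_fst, pullback.lift_fst_assoc, pullback.lift_snd_assoc,
          Category.comp_id, Category.id_comp]
        rw [← pullback.condition]
        erw [Category.comp_id]
    · show piA.ch ≫ mA.ch = piB.ch ≫ mB.ch
      simp [piA, mA, piB, mB]
      erw [Category.id_comp, Category.comp_id]
  -- the limit cone
  have key : ∀ (s : PullbackCone mA mB),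
      s.fst.dh ≫ pullback.fst (g ≫ f) (g ≫ f) ≫ g = s.snd.dh ∧
      s.fst.dh ≫ pullback.snd (g ≫ f) (g ≫ f) ≫ g = s.snd.dh := by
    intro s
    have c1 : s.fst.dh ≫ mA.dh = s.snd.dh ≫ mB.dh := by
      rw [← Pt_comp_dh, ← Pt_comp_dh, s.condition]
    constructor
    · have := congrArg (fun z => z ≫ pullback.fst f f) c1
      simp [mA, mB] at this
      erw [Category.comp_id s.snd.dh] at this
      simpa [mA, mB] using this
    · have := congrArg (fun z => z ≫ pullback.snd f f) c1
      simp [mA, mB] at this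
      erw [Category.comp_id s.snd.dh] at this
      simpa [mA, mB] using this
  have hpfs : ∀ (s : PullbackCone mA mB),
      (s.fst.dh ≫ pullback.fst (g ≫ f) (g ≫ f)) ≫ g =
      (s.fst.dh ≫ pullback.snd (g ≫ f) (g ≫ f)) ≫ g := by
    intro s
    rw [Category.assoc, Category.assoc, (key s).1, (key s).2]
  let lft : ∀ (s : PullbackCone mA mB), s.pt ⟶ Pl := fun s =>
    ⟨pullback.lift (s.fst.dh ≫ pullback.fst _ _) (s.fst.dh ≫ pullback.snd _ _)
        (hpfs s),
      s.fst.ch,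
      by
        show _ ≫ Pl.p = s.pt.p ≫ _
        simp only [Pl, pullback.lift_fst]
        have := s.fst.wp
        simpa [A] using this,
      by
        apply pullback.hom_ext
        · have hws := s.fst.ws
          simp only [Pl, Category.assoc, pullback.lift_fst]
          rw [← Category.assoc, hws]
          simp [A]
        · have hws := s.fst.ws
          simp only [Pl, Category.assoc, pullback.lift_snd]
          rw [← Category.assoc, hws]
          simp [A]⟩
  have hlim : IsLimit (PullbackCone.mk piA piB hcomm) := by
    apply PullbackCone.IsLimit.mk hcomm lft
    · intro s
      apply PtHom.ext
      · show (lft s).dh ≫ piA.dh = s.fst.dh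
        apply pullback.hom_ext
        · simp [lft, piA]
        · simp [lft, piA]
      · show (lft s).ch ≫ piA.ch = s.fst.ch
        simp [lft, piA]
        erw [Category.comp_id]
    · intro s
      apply PtHom.ext
      · show (lft s).dh ≫ piB.dh = s.snd.dh
        simp only [piB, lft]
        rw [← Category.assoc, pullback.lift_fst, Category.assoc, (key s).1]
      · show (lft s).ch ≫ piB.ch = s.snd.ch
        have c2 : s.fst.ch ≫ mA.ch = s.snd.ch ≫ mB.ch := by
          rw [← Pt_comp_ch, ← Pt_comp_ch, s.condition]
        simp [lft, piB, mA, mB] at c2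
        erw [Category.comp_id s.snd.ch] at c2
        simpa [lft, piB, mA, mB] using c2
    · intro s m h1 h2
      apply PtHom.ext
      · show m.dh = (lft s).dh
        apply pullback.hom_ext
        · have : m.dh ≫ piA.dh ≫ pullback.fst (g ≫ f) (g ≫ f) =
              s.fst.dh ≫ pullback.fst (g ≫ f) (g ≫ f) := by
            rw [← Category.assoc, ← Pt_comp_dh, h1]
          simpa [lft, piA] using this
        · have : m.dh ≫ piA.dh ≫ pullback.snd (g ≫ f) (g ≫ f) =
              s.fst.dh ≫ pullback.snd (g ≫ f) (g ≫ f) := by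
            rw [← Category.assoc, ← Pt_comp_dh, h1]
          simpa [lft, piA] using this
      · show m.ch = (lft s).ch
        have : m.ch ≫ piA.ch = s.fst.ch := by rw [← Pt_comp_ch, h1]
        simp [lft, piA] at this
        erw [Category.comp_id] at this
        simpa [lft, piA] using this
  have hobj : ∀ j : WalkingCospan, Sig ((cospan mA mB).obj j).p ((cospan mA mB).obj j).s := by
    rintro (_ | j)
    · exact hf
    · cases j
      · exact hgf
      · exact hfib.2 (𝟙 X) (𝟙 X) inferInstance (by simp)
  exact hpc WalkingCospan inferInstance inferInstance (cospan mA mB) hobj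
    (PullbackCone.mk piA piB hcomm) hlim

/-- Core argument: a reflexive relation whose first projection is `Σ`-special is an
equivalence relation, in a `Σ`-Mal'tsev category. -/
lemma reflRel_isEquiv_of_sigSpecial [HasFiniteLimits C] (Sig : SigClass C)
    (hmal : SigmaMaltsev Sig) {X : C} (R : ReflRel X)
    (hd0 : SigSpecial Sig R.d0) : R.IsEquiv := by
  -- kernel pairs of the projections, as split epimorphisms
  let f : pullback R.d0 R.d0 ⟶ R.R := pullback.fst R.d0 R.d0
  let s : R.R ⟶ pullback R.d0 R.d0 := pullback.lift (𝟙 R.R) (𝟙 R.R) rfl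
  let g : pullback R.d1 R.d1 ⟶ R.R := pullback.fst R.d1 R.d1
  let t : R.R ⟶ pullback R.d1 R.d1 := pullback.lift (𝟙 R.R) (𝟙 R.R) rfl
  let P := pullback f g
  let s' : pullback R.d1 R.d1 ⟶ P := pullback.lift (g ≫ s) (𝟙 _)
    (by simp [f, g, s])
  let tbar : pullback R.d0 R.d0 ⟶ P := pullback.lift (𝟙 _) (f ≫ t)
    (by simp [f, g, t])
  have hJEE : JointlyExtremallyEpic s' tbar := by
    apply hmal f s (pullback.snd f g) s' g t (pullback.fst f g) tbar
    · simp [f, s]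
    · simp [s']
    · simp [g, t]
    · simp [tbar]
    · exact IsPullback.of_hasPullback f g
    · simp [s']
    · simp [tbar]
    · exact hd0
  -- the difunctionality morphism
  let alph : P ⟶ R.R := pullback.fst f g ≫ pullback.snd R.d0 R.d0
  let beta : P ⟶ R.R := pullback.snd f g ≫ pullback.snd R.d1 R.d1
  let psi : P ⟶ X ⨯ X := prod.lift (beta ≫ R.d0) (alph ≫ R.d1)
  let rho : R.R ⟶ X ⨯ X := prod.lift R.d0 R.d1
  haveI hmono : Mono rho := ⟨fun {Z} a b h => by
    apply R.jm
    · have := congrArg (fun z => z ≫ (prod.fst : X ⨯ X ⟶ X)) h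
      simpa [rho] using this
    · have := congrArg (fun z => z ≫ (prod.snd : X ⨯ X ⟶ X)) h
      simpa [rho] using this⟩
  have ha' : s' ≫ psi = pullback.snd R.d1 R.d1 ≫ rho := by
    apply Limits.prod.hom_ext
    · simp [psi, rho, beta, s']
    · simp only [psi, rho, alph, s', Category.assoc, prod.lift_snd,
        pullback.lift_fst_assoc]
      simp only [g, s, Category.assoc, pullback.lift_snd_assoc, Category.id_comp]
      exact pullback.condition
  have hb' : tbar ≫ psi = pullback.snd R.d0 R.d0 ≫ rho := by
    apply Limits.prod.hom_ext
    · simp only [psi, rho, beta, tbar, Category.assoc, prod.lift_fst,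
        pullback.lift_snd_assoc]
      simp only [f, t, Category.assoc, pullback.lift_snd_assoc, Category.id_comp]
      exact pullback.condition
    · simp [psi, rho, alph, tbar]
  let a' : pullback R.d1 R.d1 ⟶ pullback psi rho :=
    pullback.lift s' (pullback.snd R.d1 R.d1) ha'
  let b' : pullback R.d0 R.d0 ⟶ pullback psi rho :=
    pullback.lift tbar (pullback.snd R.d0 R.d0) hb'
  have hiso : IsIso (pullback.fst psi rho) := hJEE (pullback.fst psi rho)
    inferInstance a' b' (pullback.lift_fst _ _ _) (pullback.lift_fst _ _ _)
  let D : P ⟶ R.R := inv (pullback.fst psi rho) ≫ pullback.snd psi rho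
  have h1 : pullback.snd psi rho ≫ R.d0 = pullback.fst psi rho ≫ (psi ≫ prod.fst) := by
    rw [← Category.assoc, pullback.condition]
    simp [rho]
  have h2 : pullback.snd psi rho ≫ R.d1 = pullback.fst psi rho ≫ (psi ≫ prod.snd) := by
    rw [← Category.assoc, pullback.condition]
    simp [rho]
  have hD0 : D ≫ R.d0 = beta ≫ R.d0 := by
    simp only [D, Category.assoc, h1]
    rw [← Category.assoc, IsIso.inv_hom_id, Category.id_comp]
    simp [psi]
  have hD1 : D ≫ R.d1 = alph ≫ R.d1 := by
    simp only [D, Category.assoc, h2]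
    rw [← Category.assoc, IsIso.inv_hom_id, Category.id_comp]
    simp [psi]
  constructor
  · -- symmetry
    let L0 : R.R ⟶ pullback R.d0 R.d0 := pullback.lift (𝟙 R.R) (R.d0 ≫ R.s0)
      (by simp [R.r0])
    let L1 : R.R ⟶ pullback R.d1 R.d1 := pullback.lift (𝟙 R.R) (R.d1 ≫ R.s0)
      (by simp [R.r1])
    let L : R.R ⟶ P := pullback.lift L0 L1 (by simp [L0, L1, f, g])
    refine ⟨L ≫ D, ?_, ?_⟩
    · rw [Category.assoc, hD0]
      simp only [beta, L, ← Category.assoc, pullback.lift_snd]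
      simp [L1, R.r0]
    · rw [Category.assoc, hD1]
      simp only [alph, L, ← Category.assoc, pullback.lift_fst]
      simp [L0, R.r1]
  · -- transitivity
    let gam : pullback R.d1 R.d0 ⟶ R.R := pullback.fst R.d1 R.d0 ≫ R.d1 ≫ R.s0
    let L0 : pullback R.d1 R.d0 ⟶ pullback R.d0 R.d0 :=
      pullback.lift gam (pullback.snd R.d1 R.d0)
        (by
          simp only [gam, Category.assoc, R.r0, Category.comp_id]
          exact pullback.condition)
    let L1 : pullback R.d1 R.d0 ⟶ pullback R.d1 R.d1 :=
      pullback.lift gam (pullback.fst R.d1 R.d0)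
        (by simp [gam, R.r1])
    let L : pullback R.d1 R.d0 ⟶ P := pullback.lift L0 L1
      (by simp [L0, L1, f, g])
    refine ⟨L ≫ D, ?_, ?_⟩
    · rw [Category.assoc, hD0]
      simp only [beta, L, ← Category.assoc, pullback.lift_snd]
      simp [L1]
    · rw [Category.assoc, hD1]
      simp only [alph, L, ← Category.assoc, pullback.lift_fst]
      simp [L0]

end Aux

/-- In a point-congruous `Σ`-Mal'tsev category, each fibre `Σl_Y(C)` of `Σ`-special
morphisms over `Y` is a Mal'tsev category: every reflexive relation in it is an
equivalence relation.  (Taking `Y` terminal, the `Σ`-special objects form a Mal'tsev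
category, the Mal'tsev core.) -/
theorem sigma_special_slice_maltsev [HasFiniteLimits C] (Sig : SigClass C)
    (hfib : Fibrational Sig) (hpc : PointCongruous Sig) (hmal : SigmaMaltsev Sig)
    {Y X : C} (gX : X ⟶ Y) (hgX : SigSpecial Sig gX)
    (R : ReflRel X) (hover : R.d0 ≫ gX = R.d1 ≫ gX)
    (hgR : SigSpecial Sig (R.d0 ≫ gX)) :
    R.IsEquiv := by
  have hd0 : SigSpecial Sig R.d0 :=
    sigSpecial_of_comp Sig hfib hpc R.d0 gX hgX hgR
  exact reflRel_isEquiv_of_sigSpecial Sig hmal R hd0
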